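/- Let l be an odd prime, let q be an integer not divisible by l, and suppose that the multiplicative order e of −q modulo l is odd. If the partitions λ and μ have the same e-core, i.e. they are connected by a finite sequence of partitions in which each term is obtained from the previous one by adding or removing an e-hook, then R_λ = R_μ in ℤ/lℤ. (That is, the value of P_λ(q²)/P_λ(−q) mod l depends only on the e-core of λ.) -/

import Mathlib

/-- `f` encodes a partition `λ` via its parts `λ_i = f i` for `i ≥ 1` (and `f 0 = 0`):
the parts are weakly decreasing and eventually zero. -/
def IsPartition (f : ℕ → ℕ) : Prop :=
  f 0 = 0 ∧ (∀ i, 1 ≤ i → f (i + 1) ≤ f i) ∧ ∃ N, ∀ i, N ≤ i → f i = 0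

/-- The conjugate partition: `conjP f j = #{i ≥ 1 | f i ≥ j}`. -/
noncomputable def conjP (f : ℕ → ℕ) (j : ℕ) : ℕ :=
  Set.ncard {i : ℕ | 1 ≤ i ∧ j ≤ f i}

/-- The size `|λ| = Σ_i λ_i` of the partition. -/
noncomputable def wtP (f : ℕ → ℕ) : ℕ := ∑ᶠ i, f i

/-- `d_λ = Σ_i (λ'_i)² − Σ_i i·λ_i`. -/
noncomputable def dP (f : ℕ → ℕ) : ℤ :=
  (∑ᶠ i : ℕ, (conjP f i : ℤ) ^ 2) - ∑ᶠ i : ℕ, (i : ℤ) * (f i : ℤ)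

/-- The multiset of hook lengths of the partition: for each cell `(i,j)` of the Young
diagram (`1 ≤ i`, `1 ≤ j ≤ λ_i`) the hook length `λ_i − j + λ'_j − i + 1`. -/
noncomputable def hooksP (f : ℕ → ℕ) : Multiset ℤ :=
  (((Finset.Icc 1 (conjP f 1)) ×ˢ (Finset.Icc 1 (f 1))).filter
      (fun p => p.2 ≤ f p.1)).val.map
    (fun p => (f p.1 : ℤ) - (p.2 : ℤ) + (conjP f p.2 : ℤ) - (p.1 : ℤ) + 1)

/-- `R_λ = (−q)^{d_λ} · ∏_{i=1}^{|λ|} ((−q)^i + 1) · (∏_{h ∈ hooks(λ)} ((−q)^h + 1))⁻¹`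
computed in the field `ℤ/lℤ`. -/
noncomputable def RP (l : ℕ) [Fact l.Prime] (q : ℤ) (f : ℕ → ℕ) : ZMod l :=
  ((-q : ℤ) : ZMod l) ^ dP f *
    (∏ i ∈ Finset.Icc 1 (wtP f), (((-q : ℤ) : ZMod l) ^ i + 1)) *
    (((hooksP f).map (fun h => ((-q : ℤ) : ZMod l) ^ h + 1)).prod)⁻¹

def InDiagram (f : ℕ → ℕ) (p : ℕ × ℕ) : Prop :=
  1 ≤ p.1 ∧ 1 ≤ p.2 ∧ p.2 ≤ f p.1

/-- Two cells are edge-adjacent. -/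
def AdjCell (p q : ℕ × ℕ) : Prop :=
  (p.1 = q.1 ∧ (p.2 + 1 = q.2 ∨ q.2 + 1 = p.2)) ∨
  (p.2 = q.2 ∧ (p.1 + 1 = q.1 ∨ q.1 + 1 = p.1))

/-- `μ = g` is obtained from `λ = f` by adding an `e`-hook: the diagram of `f` is
contained in that of `g`, `|g| = |f| + e`, and the skew diagram `g ∖ f` is a rim hook
(connected through edge-adjacent cells and containing no 2×2 square of cells). -/
def AddsEHook (e : ℕ) (f g : ℕ → ℕ) : Prop :=
  (∀ i, f i ≤ g i) ∧ wtP g = wtP f + e ∧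
  (∀ p q : ℕ × ℕ,
      (InDiagram g p ∧ ¬ InDiagram f p) → (InDiagram g q ∧ ¬ InDiagram f q) →
      Relation.ReflTransGen
        (fun a b => (InDiagram g a ∧ ¬ InDiagram f a) ∧
          (InDiagram g b ∧ ¬ InDiagram f b) ∧ AdjCell a b) p q) ∧
  ¬ ∃ i j : ℕ,
      (InDiagram g (i, j) ∧ ¬ InDiagram f (i, j)) ∧
      (InDiagram g (i + 1, j) ∧ ¬ InDiagram f (i + 1, j)) ∧
      (InDiagram g (i, j + 1) ∧ ¬ InDiagram f (i, j + 1)) ∧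
      (InDiagram g (i + 1, j + 1) ∧ ¬ InDiagram f (i + 1, j + 1))


/-! ### Generic helpers -/

lemma Ioc_zero_eq_Icc_one (n : ℕ) : Finset.Ioc 0 n = Finset.Icc 1 n := by
  ext i; simp [Nat.lt_iff_add_one_le]

lemma prod_Ioc_shift {M : Type*} [CommMonoid M] (h : ℕ → M) (a b : ℕ) :
    ∏ i ∈ Finset.Ioc (a + 1) (b + 1), h i = ∏ i ∈ Finset.Ioc a b, h (i + 1) := by
  have : Finset.Ioc (a+1) (b+1) = (Finset.Ioc a b).map ⟨fun i => i + 1, add_left_injective 1⟩ := by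
    ext i; simp only [Finset.mem_Ioc, Finset.mem_map, Function.Embedding.coeFn_mk]
    constructor
    · intro hi; exact ⟨i - 1, by omega, by omega⟩
    · rintro ⟨j, hj, rfl⟩; omega
  rw [this, Finset.prod_map]; rfl

lemma sum_Ioc_shift {M : Type*} [AddCommMonoid M] (h : ℕ → M) (a b : ℕ) :
    ∑ i ∈ Finset.Ioc (a + 1) (b + 1), h i = ∑ i ∈ Finset.Ioc a b, h (i + 1) := by
  have : Finset.Ioc (a+1) (b+1) = (Finset.Ioc a b).map ⟨fun i => i + 1, add_left_injective 1⟩ := by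
    ext i; simp only [Finset.mem_Ioc, Finset.mem_map, Function.Embedding.coeFn_mk]
    constructor
    · intro hi; exact ⟨i - 1, by omega, by omega⟩
    · rintro ⟨j, hj, rfl⟩; omega
  rw [this, Finset.sum_map]; rfl

lemma sum_Ioc_exchange {M : Type*} [AddCommMonoid M] (n : ℕ) (h : ℕ → ℕ → M) :
    ∑ i ∈ Finset.Ioc 0 n, ∑ j ∈ Finset.Ioc i n, h i j
      = ∑ j ∈ Finset.Ioc 0 n, ∑ i ∈ Finset.Ioc 0 (j - 1), h i j := by
  have L : ∀ i ∈ Finset.Ioc 0 n, ∑ j ∈ Finset.Ioc i n, h i j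
      = ∑ j ∈ Finset.Ioc 0 n, if i < j then h i j else 0 := by
    intro i hi
    rw [← Finset.sum_filter]
    congr 1
    ext j; simp only [Finset.mem_Ioc, Finset.mem_filter]
    simp only [Finset.mem_Ioc] at hi
    omega
  rw [Finset.sum_congr rfl L, Finset.sum_comm]
  refine Finset.sum_congr rfl fun j hj => ?_
  rw [← Finset.sum_filter]
  congr 1
  ext i; simp only [Finset.mem_Ioc, Finset.mem_filter]
  simp only [Finset.mem_Ioc] at hj
  omega

lemma prod_zpow_sum {K : Type*} [Field K] {x : K} (hx : x ≠ 0) {α : Type*} (s : Finset α)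
    (t : α → ℤ) : ∏ a ∈ s, x ^ t a = x ^ (∑ a ∈ s, t a) := by
  classical
  induction s using Finset.cons_induction with
  | empty => simp
  | cons a s ha ih =>
      rw [Finset.prod_cons, Finset.sum_cons, ih, ← zpow_add₀ hx]

/-! ### Partition API -/

def Bnd (f : ℕ → ℕ) (n : ℕ) : Prop := ∀ i, n < i → f i = 0

lemma IsPartition.anti {f : ℕ → ℕ} (hf : IsPartition f) :
    ∀ a b : ℕ, 1 ≤ a → a ≤ b → f b ≤ f a := by
  intro a b ha hab
  induction b, hab using Nat.le_induction with
  | base => exact le_rfl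
  | succ b hab ih => exact le_trans (hf.2.1 b (by omega)) ih

lemma conjP_zero (f : ℕ → ℕ) : conjP f 0 = 0 := by
  have : {i : ℕ | 1 ≤ i ∧ 0 ≤ f i} = Set.Ici 1 := by ext i; simp
  rw [conjP, this]
  exact Set.Infinite.ncard (Set.Ici_infinite 1)

lemma conjP_eq {f : ℕ → ℕ} {n : ℕ} (hb : Bnd f n) {j : ℕ} (hj : 1 ≤ j) :
    conjP f j = ((Finset.Ioc 0 n).filter (fun i => j ≤ f i)).card := by
  have : {i : ℕ | 1 ≤ i ∧ j ≤ f i} = ↑((Finset.Ioc 0 n).filter (fun i => j ≤ f i)) := by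
    ext i
    simp only [Set.mem_setOf_eq, Finset.coe_filter, Finset.mem_Ioc]
    constructor
    · rintro ⟨h1, h2⟩
      refine ⟨⟨by omega, ?_⟩, h2⟩
      by_contra hni
      rw [hb i (by omega)] at h2; omega
    · rintro ⟨⟨h1, _⟩, h2⟩; exact ⟨h1, h2⟩
  rw [conjP, this, Set.ncard_coe_finset]

lemma conjP_le {f : ℕ → ℕ} {n : ℕ} (hb : Bnd f n) {j : ℕ} (hj : 1 ≤ j) :
    conjP f j ≤ n := by
  rw [conjP_eq hb hj]
  calc ((Finset.Ioc 0 n).filter (fun i => j ≤ f i)).card ≤ (Finset.Ioc 0 n).card :=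
        Finset.card_filter_le _ _
    _ = n := by simp

lemma conjP_eq_zero {f : ℕ → ℕ} {n : ℕ} (hf : IsPartition f) (hb : Bnd f n) {j : ℕ}
    (hj : f 1 < j) : conjP f j = 0 := by
  rw [conjP_eq hb (by omega)]
  rw [Finset.card_eq_zero]
  rw [Finset.filter_eq_empty_iff]
  intro i hi
  simp only [Finset.mem_Ioc] at hi
  have := hf.anti 1 i (le_refl _) (by omega)
  omega

lemma row_zero_of_conj {f : ℕ → ℕ} {n : ℕ} (hf : IsPartition f) (hb : Bnd f n) {i : ℕ}
    (hi : conjP f 1 < i) : f i = 0 := by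
  by_contra hne
  have hi1 : 1 ≤ i := by
    rcases Nat.eq_zero_or_pos i with h | h
    · rw [h, hf.1] at hne; exact absurd rfl hne
    · omega
  have hin : i ≤ n := by
    by_contra h
    exact hne (hb i (by omega))
  have hsub : Finset.Ioc 0 i ⊆ (Finset.Ioc 0 n).filter (fun i' => 1 ≤ f i') := by
    intro i' hi'
    simp only [Finset.mem_Ioc] at hi'
    simp only [Finset.mem_filter, Finset.mem_Ioc]
    have := hf.anti i' i (by omega) (by omega)
    constructor
    · omega
    · omega
  have := Finset.card_le_card hsub
  rw [← conjP_eq hb le_rfl] at this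
  simp at this
  omega

lemma conjP_anti {f : ℕ → ℕ} {n : ℕ} (hb : Bnd f n) {j j' : ℕ} (hj : 1 ≤ j) (hjj : j ≤ j') :
    conjP f j' ≤ conjP f j := by
  rw [conjP_eq hb hj, conjP_eq hb (by omega)]
  apply Finset.card_le_card
  intro i hi
  simp only [Finset.mem_filter] at hi ⊢
  exact ⟨hi.1, by omega⟩

lemma wtP_eq {f : ℕ → ℕ} {n : ℕ} (hf : IsPartition f) (hb : Bnd f n) :
    wtP f = ∑ i ∈ Finset.Ioc 0 n, f i := by
  rw [wtP]
  apply finsum_eq_sum_of_support_subset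
  intro i hi
  simp only [Function.mem_support] at hi
  simp only [Finset.coe_Ioc, Set.mem_Ioc]
  constructor
  · rcases Nat.eq_zero_or_pos i with h | h
    · rw [h, hf.1] at hi; exact absurd rfl hi
    · omega
  · by_contra h
    exact hi (hb i (by omega))
/-! ### dP as a simple sum -/

lemma dP_eq {f : ℕ → ℕ} {n : ℕ} (hf : IsPartition f) (hb : Bnd f n) :
    dP f = ∑ i ∈ Finset.Ioc 0 n, ((i : ℤ) - 1) * f i := by
  have hA : ∑ᶠ i : ℕ, (conjP f i : ℤ) ^ 2 = ∑ j ∈ Finset.Ioc 0 (f 1), (conjP f j : ℤ) ^ 2 := by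
    apply finsum_eq_sum_of_support_subset
    intro j hj
    simp only [Function.mem_support] at hj
    simp only [Finset.coe_Ioc, Set.mem_Ioc]
    constructor
    · rcases Nat.eq_zero_or_pos j with h | h
      · rw [h, conjP_zero] at hj; simp at hj
      · omega
    · by_contra h
      rw [conjP_eq_zero hf hb (by omega)] at hj; simp at hj
  have hB : ∑ᶠ i : ℕ, (i : ℤ) * (f i : ℤ) = ∑ i ∈ Finset.Ioc 0 n, (i : ℤ) * f i := by
    apply finsum_eq_sum_of_support_subset
    intro i hi
    simp only [Function.mem_support] at hi
    simp only [Finset.coe_Ioc, Set.mem_Ioc]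
    constructor
    · rcases Nat.eq_zero_or_pos i with h | h
      · rw [h] at hi; simp at hi
      · omega
    · by_contra h
      rw [hb i (by omega)] at hi; simp at hi
  have key : ∑ j ∈ Finset.Ioc 0 (f 1), (conjP f j : ℤ) ^ 2
      = ∑ i ∈ Finset.Ioc 0 n, (2 * (i : ℤ) - 1) * f i := by
    have step1 : ∀ j ∈ Finset.Ioc 0 (f 1), ((conjP f j : ℤ)) ^ 2
        = ∑ i ∈ Finset.Ioc 0 n, ∑ i' ∈ Finset.Ioc 0 n,
            (if j ≤ f i ∧ j ≤ f i' then (1 : ℤ) else 0) := by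
      intro j hj
      simp only [Finset.mem_Ioc] at hj
      rw [conjP_eq hb (by omega)]
      have hcard : ((((Finset.Ioc 0 n).filter (fun i => j ≤ f i)).card : ℤ))
          = ∑ i ∈ Finset.Ioc 0 n, (if j ≤ f i then (1 : ℤ) else 0) := by
        rw [Finset.sum_boole]
      rw [sq, hcard, Finset.sum_mul_sum]
      refine Finset.sum_congr rfl fun i _ => Finset.sum_congr rfl fun i' _ => ?_
      by_cases h1 : j ≤ f i <;> by_cases h2 : j ≤ f i' <;> simp [h1, h2]
    rw [Finset.sum_congr rfl step1]
    rw [Finset.sum_comm]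
    have step2 : ∀ i ∈ Finset.Ioc 0 n, ∑ j ∈ Finset.Ioc 0 (f 1), ∑ i' ∈ Finset.Ioc 0 n,
        (if j ≤ f i ∧ j ≤ f i' then (1 : ℤ) else 0)
        = ∑ i' ∈ Finset.Ioc 0 n, (min (f i) (f i') : ℤ) := by
      intro i hi
      rw [Finset.sum_comm]
      refine Finset.sum_congr rfl fun i' hi' => ?_
      simp only [Finset.mem_Ioc] at hi hi'
      rw [← Finset.sum_filter]
      have hfilt : (Finset.Ioc 0 (f 1)).filter (fun j => j ≤ f i ∧ j ≤ f i')
          = Finset.Ioc 0 (min (f i) (f i')) := by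
        have h1 : f i ≤ f 1 := hf.anti 1 i (le_refl _) (by omega)
        have h2 : f i' ≤ f 1 := hf.anti 1 i' (le_refl _) (by omega)
        ext j
        simp only [Finset.mem_filter, Finset.mem_Ioc]
        omega
      rw [hfilt]
      simp
    rw [Finset.sum_congr rfl step2]
    have step3 : ∀ i ∈ Finset.Ioc 0 n, ∑ i' ∈ Finset.Ioc 0 n, (min (f i) (f i') : ℤ)
        = (i : ℤ) * f i + ∑ i' ∈ Finset.Ioc i n, (f i' : ℤ) := by
      intro i hi
      simp only [Finset.mem_Ioc] at hi
      rw [← Finset.sum_Ioc_consecutive _ (Nat.zero_le i) hi.2]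
      congr 1
      · have hterm : ∀ i' ∈ Finset.Ioc 0 i, ((f i : ℤ) ⊓ (f i' : ℤ)) = (f i : ℤ) := by
          intro i' hi'
          simp only [Finset.mem_Ioc] at hi'
          have : f i ≤ f i' := hf.anti i' i (by omega) (by omega)
          rw [inf_eq_left.mpr (by exact_mod_cast this)]
        rw [Finset.sum_congr rfl hterm, Finset.sum_const, Nat.card_Ioc, Nat.sub_zero,
          nsmul_eq_mul]
      · refine Finset.sum_congr rfl fun i' hi' => ?_
        simp only [Finset.mem_Ioc] at hi'
        have h2 : f i' ≤ f i := hf.anti i i' (by omega) (by omega)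
        rw [inf_eq_right.mpr (by exact_mod_cast h2)]
    rw [Finset.sum_congr rfl step3, Finset.sum_add_distrib]
    rw [sum_Ioc_exchange n (fun i i' => (f i' : ℤ))]
    have step4 : ∀ i' ∈ Finset.Ioc 0 n, ∑ i ∈ Finset.Ioc 0 (i' - 1), (f i' : ℤ)
        = ((i' : ℤ) - 1) * f i' := by
      intro i' hi'
      simp only [Finset.mem_Ioc] at hi'
      rw [Finset.sum_const, Nat.card_Ioc, Nat.sub_zero, nsmul_eq_mul]
      have : ((i' - 1 : ℕ) : ℤ) = (i' : ℤ) - 1 := by omega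
      rw [this]
    rw [Finset.sum_congr rfl step4, ← Finset.sum_add_distrib]
    refine Finset.sum_congr rfl fun i _ => by ring
  rw [dP, hA, hB, key, ← Finset.sum_sub_distrib]
  refine Finset.sum_congr rfl fun i _ => by ring
/-! ### hooks as a double product -/

lemma hooks_prod {M : Type*} [CommMonoid M] (F : ℤ → M) {f : ℕ → ℕ} {n : ℕ}
    (hf : IsPartition f) (hb : Bnd f n) :
    ((hooksP f).map F).prod
      = ∏ i ∈ Finset.Ioc 0 n, ∏ j ∈ Finset.Ioc 0 (f i),
          F ((f i : ℤ) - j + conjP f j - i + 1) := by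
  rw [hooksP, Multiset.map_map]
  rw [show ((((Finset.Icc 1 (conjP f 1)) ×ˢ (Finset.Icc 1 (f 1))).filter
      (fun p => p.2 ≤ f p.1)).val.map
      (F ∘ fun p => (f p.1 : ℤ) - (p.2 : ℤ) + (conjP f p.2 : ℤ) - (p.1 : ℤ) + 1)).prod
    = ∏ p ∈ (((Finset.Icc 1 (conjP f 1)) ×ˢ (Finset.Icc 1 (f 1))).filter
      (fun p => p.2 ≤ f p.1)),
        F ((f p.1 : ℤ) - (p.2 : ℤ) + (conjP f p.2 : ℤ) - (p.1 : ℤ) + 1) from rfl]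
  rw [Finset.prod_filter, Finset.prod_product]
  have inner : ∀ i ∈ Finset.Icc 1 (conjP f 1),
      (∏ j ∈ Finset.Icc 1 (f 1),
        if j ≤ f i then F ((f i : ℤ) - j + conjP f j - i + 1) else 1)
      = ∏ j ∈ Finset.Ioc 0 (f i), F ((f i : ℤ) - j + conjP f j - i + 1) := by
    intro i hi
    simp only [Finset.mem_Icc] at hi
    rw [← Finset.prod_filter]
    have hfi : f i ≤ f 1 := hf.anti 1 i le_rfl hi.1
    congr 1
    ext j
    simp only [Finset.mem_filter, Finset.mem_Icc, Finset.mem_Ioc]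
    omega
  rw [Finset.prod_congr rfl inner]
  rw [← Ioc_zero_eq_Icc_one]
  apply Finset.prod_subset
  · intro i hi
    simp only [Finset.mem_Ioc] at hi ⊢
    exact ⟨hi.1, le_trans hi.2 (conjP_le hb le_rfl)⟩
  · intro i hi hni
    simp only [Finset.mem_Ioc] at hi hni
    have : f i = 0 := row_zero_of_conj hf hb (by omega)
    rw [this]
    simp

/-! ### shifted partition -/

def fsh (f : ℕ → ℕ) : ℕ → ℕ := fun i => if i = 0 then 0 else f (i + 1)

lemma fsh_part {f : ℕ → ℕ} (hf : IsPartition f) : IsPartition (fsh f) := by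
  refine ⟨rfl, fun i hi => ?_, ?_⟩
  · simp only [fsh, if_neg (by omega : ¬ i + 1 = 0), if_neg (by omega : ¬ i = 0)]
    exact hf.2.1 (i + 1) (by omega)
  · obtain ⟨N, hN⟩ := hf.2.2
    exact ⟨N, fun i hi => by
      simp only [fsh]
      split
      · rfl
      · exact hN (i + 1) (by omega)⟩

lemma fsh_bnd {f : ℕ → ℕ} {n : ℕ} (hb : Bnd f (n + 1)) : Bnd (fsh f) n := by
  intro i hi
  simp only [fsh, if_neg (by omega : ¬ i = 0)]
  exact hb (i + 1) (by omega)

lemma conjP_fsh {f : ℕ → ℕ} {n : ℕ} (hf : IsPartition f) (hb : Bnd f (n + 1)) {j : ℕ}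
    (hj : 1 ≤ j) (hjf : j ≤ f 1) : conjP f j = conjP (fsh f) j + 1 := by
  rw [conjP_eq hb hj, conjP_eq (fsh_bnd hb) hj]
  have h1 : (Finset.Ioc 0 (n+1)).filter (fun i => j ≤ f i)
      = insert 1 (((Finset.Ioc 0 n).filter (fun i => j ≤ fsh f i)).map
          ⟨fun i => i + 1, add_left_injective 1⟩) := by
    ext i
    simp only [Finset.mem_insert, Finset.mem_filter, Finset.mem_Ioc, Finset.mem_map,
      Function.Embedding.coeFn_mk]
    constructor
    · rintro ⟨⟨h0, hn⟩, hfi⟩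
      rcases Nat.eq_or_lt_of_le h0 with h | h
      · left; omega
      · right
        refine ⟨i - 1, ⟨⟨by omega, by omega⟩, ?_⟩, by omega⟩
        simp only [fsh, if_neg (by omega : ¬ i - 1 = 0)]
        rw [show i - 1 + 1 = i by omega]
        exact hfi
    · rintro (rfl | ⟨a, ⟨⟨ha0, han⟩, hfa⟩, rfl⟩)
      · exact ⟨⟨by omega, by omega⟩, hjf⟩
      · simp only [fsh, if_neg (by omega : ¬ a = 0)] at hfa
        exact ⟨⟨by omega, by omega⟩, hfa⟩
  rw [h1, Finset.card_insert_of_notMem, Finset.card_map]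
  simp only [Finset.mem_map, Finset.mem_filter, Finset.mem_Ioc, Function.Embedding.coeFn_mk]
  rintro ⟨a, _, ha⟩
  omega
/-! ### first-row identity -/

def bP (f : ℕ → ℕ) (n i : ℕ) : ℕ := f i + (n - i)

lemma first_row {M : Type*} [CommMonoid M] (F : ℤ → M) {f : ℕ → ℕ} {n : ℕ}
    (hf : IsPartition f) (hb : Bnd f (n + 1)) :
    (∏ j ∈ Finset.Ioc 0 (f 1), F ((f 1 : ℤ) - j + conjP f j - ((1:ℕ):ℤ) + 1)) *
      (∏ j ∈ Finset.Ioc 1 (n + 1), F ((bP f (n+1) 1 : ℤ) - bP f (n+1) j))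
    = ∏ k ∈ Finset.Ioc 0 (f 1 + n), F (k : ℤ) := by
  classical
  set hfun : ℕ → ℕ := fun j => (f 1 - j) + conjP f j with hhfun
  set dfun : ℕ → ℕ := fun j => (f 1 - f j) + (j - 1) with hdfun
  -- basic facts
  have hconj_ge : ∀ j, 1 ≤ j → j ≤ f 1 → 1 ≤ conjP f j := by
    intro j h1 h2
    rw [conjP_eq hb h1]
    rw [Nat.succ_le_iff, Finset.card_pos]
    exact ⟨1, by simp only [Finset.mem_filter, Finset.mem_Ioc]; omega⟩
  have hconj_le : ∀ j, 1 ≤ j → conjP f j ≤ n + 1 := fun j hj => conjP_le hb hj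
  have hanti : ∀ i, 1 ≤ i → f i ≤ f 1 := fun i hi => hf.anti 1 i le_rfl hi
  -- h strictly decreasing
  have hmono : ∀ j ∈ Finset.Ioc 0 (f 1), ∀ j' ∈ Finset.Ioc 0 (f 1), j < j' →
      hfun j' < hfun j := by
    intro j hj j' hj' hlt
    simp only [Finset.mem_Ioc] at hj hj'
    have := conjP_anti hb (show 1 ≤ j by omega) (le_of_lt hlt)
    simp only [hhfun]
    omega
  have dmono : ∀ j ∈ Finset.Ioc 1 (n+1), ∀ j' ∈ Finset.Ioc 1 (n+1), j < j' →
      dfun j < dfun j' := by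
    intro j hj j' hj' hlt
    simp only [Finset.mem_Ioc] at hj hj'
    have := hf.anti j j' (by omega) (le_of_lt hlt)
    have := hanti j (by omega)
    have := hanti j' (by omega)
    simp only [hdfun]
    omega
  have hinj : ∀ j ∈ Finset.Ioc 0 (f 1), ∀ j' ∈ Finset.Ioc 0 (f 1),
      hfun j = hfun j' → j = j' := by
    intro j hj j' hj' heq
    by_contra hne
    rcases Nat.lt_or_ge j j' with h | h
    · have := hmono j hj j' hj' h; omega
    · have := hmono j' hj' j hj (by omega); omega
  have dinj : ∀ j ∈ Finset.Ioc 1 (n+1), ∀ j' ∈ Finset.Ioc 1 (n+1),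
      dfun j = dfun j' → j = j' := by
    intro j hj j' hj' heq
    by_contra hne
    rcases Nat.lt_or_ge j j' with h | h
    · have := dmono j hj j' hj' h; omega
    · have := dmono j' hj' j hj (by omega); omega
  -- disjointness
  have hdisj : ∀ j ∈ Finset.Ioc 0 (f 1), ∀ k ∈ Finset.Ioc 1 (n+1), hfun j ≠ dfun k := by
    intro j hj k hk heq
    simp only [Finset.mem_Ioc] at hj hk
    simp only [hhfun, hdfun] at heq
    have hfk1 : f k ≤ f 1 := hanti k (by omega)
    rcases Nat.lt_or_ge (f k) j with hc | hc
    · -- f k < j : conjP f j ≤ k - 1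
      have hle : conjP f j ≤ k - 1 := by
        rw [conjP_eq hb (by omega)]
        have : (Finset.Ioc 0 (n+1)).filter (fun i => j ≤ f i) ⊆ Finset.Ioc 0 (k-1) := by
          intro i hi
          simp only [Finset.mem_filter, Finset.mem_Ioc] at hi ⊢
          have : ¬ k ≤ i := by
            intro hki
            have := hf.anti k i (by omega) hki
            omega
          omega
        calc ((Finset.Ioc 0 (n+1)).filter (fun i => j ≤ f i)).card
            ≤ (Finset.Ioc 0 (k-1)).card := Finset.card_le_card this
          _ = k - 1 := by simp
      omega
    · -- j ≤ f k : conjP f j ≥ k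
      have hge : k ≤ conjP f j := by
        rw [conjP_eq hb (by omega)]
        have : Finset.Ioc 0 k ⊆ (Finset.Ioc 0 (n+1)).filter (fun i => j ≤ f i) := by
          intro i hi
          simp only [Finset.mem_filter, Finset.mem_Ioc] at hi ⊢
          have := hf.anti i k (by omega) (by omega)
          omega
        calc k = (Finset.Ioc 0 k).card := by simp
          _ ≤ _ := Finset.card_le_card this
      omega
  -- the two images
  set A : Finset ℕ := (Finset.Ioc 0 (f 1)).image hfun with hA
  set Bs : Finset ℕ := (Finset.Ioc 1 (n+1)).image dfun with hBs
  have hcardA : A.card = f 1 := by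
    rw [hA, Finset.card_image_of_injOn (fun a ha b hb h => hinj a ha b hb h)]
    simp
  have hcardB : Bs.card = n := by
    rw [hBs, Finset.card_image_of_injOn (fun a ha b hb h => dinj a ha b hb h)]
    simp
  have hABdisj : Disjoint A Bs := by
    rw [Finset.disjoint_left]
    intro m hm hm'
    rw [hA, Finset.mem_image] at hm
    rw [hBs, Finset.mem_image] at hm'
    obtain ⟨j, hj, rfl⟩ := hm
    obtain ⟨k, hk, hjk⟩ := hm'
    exact hdisj j hj k hk hjk.symm
  have hsub : A ∪ Bs ⊆ Finset.Ioc 0 (f 1 + n) := by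
    intro m hm
    rw [Finset.mem_union] at hm
    simp only [Finset.mem_Ioc]
    rcases hm with hm | hm
    · rw [hA, Finset.mem_image] at hm
      obtain ⟨j, hj, rfl⟩ := hm
      simp only [Finset.mem_Ioc] at hj
      have h1 := hconj_ge j (by omega) hj.2
      have h2 := hconj_le j (by omega)
      simp only [hhfun]
      omega
    · rw [hBs, Finset.mem_image] at hm
      obtain ⟨k, hk, rfl⟩ := hm
      simp only [Finset.mem_Ioc] at hk
      have := hanti k (by omega)
      simp only [hdfun]
      omega
  have hunion : A ∪ Bs = Finset.Ioc 0 (f 1 + n) := by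
    apply Finset.eq_of_subset_of_card_le hsub
    rw [Finset.card_union_of_disjoint hABdisj, hcardA, hcardB]
    simp
  -- products
  have hprodA : ∏ m ∈ A, F (m : ℤ)
      = ∏ j ∈ Finset.Ioc 0 (f 1), F ((f 1 : ℤ) - j + conjP f j - ((1:ℕ):ℤ) + 1) := by
    rw [hA, Finset.prod_image (fun a ha b hb h => hinj a ha b hb h)]
    refine Finset.prod_congr rfl fun j hj => ?_
    simp only [Finset.mem_Ioc] at hj
    congr 1
    simp only [hhfun]
    push_cast
    omega
  have hprodB : ∏ m ∈ Bs, F (m : ℤ)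
      = ∏ j ∈ Finset.Ioc 1 (n+1), F ((bP f (n+1) 1 : ℤ) - bP f (n+1) j) := by
    rw [hBs, Finset.prod_image (fun a ha b hb h => dinj a ha b hb h)]
    refine Finset.prod_congr rfl fun j hj => ?_
    simp only [Finset.mem_Ioc] at hj
    congr 1
    have := hanti j (by omega)
    simp only [hdfun, bP]
    push_cast
    omega
  rw [← hunion, Finset.prod_union hABdisj, hprodA, hprodB]
lemma prod_Ioc_shift1 {M : Type*} [CommMonoid M] (h : ℕ → M) (n : ℕ) :
    ∏ i ∈ Finset.Ioc 1 (n + 1), h i = ∏ i ∈ Finset.Ioc 0 n, h (i + 1) := by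
  simpa using prod_Ioc_shift h 0 n

theorem hook_identity {M : Type*} [CommMonoid M] (F : ℤ → M) :
    ∀ (n : ℕ) (f : ℕ → ℕ), IsPartition f → Bnd f n →
    (∏ i ∈ Finset.Ioc 0 n, ∏ j ∈ Finset.Ioc 0 (f i),
        F ((f i : ℤ) - j + conjP f j - i + 1)) *
      (∏ i ∈ Finset.Ioc 0 n, ∏ j ∈ Finset.Ioc i n,
        F ((bP f n i : ℤ) - (bP f n j : ℤ)))
    = ∏ i ∈ Finset.Ioc 0 n, ∏ k ∈ Finset.Ioc 0 (bP f n i), F (k : ℤ) := by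
  intro n
  induction n with
  | zero => intro f hf hb; simp
  | succ n IH =>
    intro f hf hb
    have hfp := fsh_part hf
    have hfb := fsh_bnd hb
    have hanti : ∀ i, 1 ≤ i → f i ≤ f 1 := fun i hi => hf.anti 1 i le_rfl hi
    have hcons : Finset.Ioc 0 (n+1)
        = Finset.cons 1 (Finset.Ioc 1 (n+1)) Finset.left_notMem_Ioc := by
      rw [Ioc_zero_eq_Icc_one, Finset.Icc_eq_cons_Ioc (by omega)]
    have hbP : ∀ i ∈ Finset.Ioc 0 n, bP f (n+1) (i+1) = bP (fsh f) n i := by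
      intro i hi
      simp only [Finset.mem_Ioc] at hi
      simp only [bP, fsh, if_neg (by omega : ¬ i = 0)]
      omega
    have hbP1 : bP f (n+1) 1 = f 1 + n := by simp [bP]
    have eH : (∏ i ∈ Finset.Ioc 0 (n+1), ∏ j ∈ Finset.Ioc 0 (f i),
          F ((f i : ℤ) - j + conjP f j - i + 1))
        = (∏ j ∈ Finset.Ioc 0 (f 1),
            F ((f 1 : ℤ) - j + conjP f j - ((1:ℕ):ℤ) + 1)) *
          ∏ i ∈ Finset.Ioc 0 n, ∏ j ∈ Finset.Ioc 0 (f (i+1)),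
            F ((f (i+1) : ℤ) - j + conjP f j - ((i+1 : ℕ):ℤ) + 1) := by
      rw [hcons, Finset.prod_cons]
      exact congrArg (fun z => _ * z) (prod_Ioc_shift1 _ n)
    have eD : (∏ i ∈ Finset.Ioc 0 (n+1), ∏ j ∈ Finset.Ioc i (n+1),
          F ((bP f (n+1) i : ℤ) - (bP f (n+1) j : ℤ)))
        = (∏ j ∈ Finset.Ioc 1 (n+1),
            F ((bP f (n+1) 1 : ℤ) - (bP f (n+1) j : ℤ))) *
          ∏ i ∈ Finset.Ioc 0 n, ∏ j ∈ Finset.Ioc (i+1) (n+1),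
            F ((bP f (n+1) (i+1) : ℤ) - (bP f (n+1) j : ℤ)) := by
      rw [hcons, Finset.prod_cons]
      exact congrArg (fun z => _ * z) (prod_Ioc_shift1 _ n)
    have eR : (∏ i ∈ Finset.Ioc 0 (n+1), ∏ k ∈ Finset.Ioc 0 (bP f (n+1) i), F (k : ℤ))
        = (∏ k ∈ Finset.Ioc 0 (bP f (n+1) 1), F (k : ℤ)) *
          ∏ i ∈ Finset.Ioc 0 n, ∏ k ∈ Finset.Ioc 0 (bP f (n+1) (i+1)), F (k : ℤ) := by
      rw [hcons, Finset.prod_cons]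
      exact congrArg (fun z => _ * z) (prod_Ioc_shift1 _ n)
    have hH : ∀ i ∈ Finset.Ioc 0 n,
        (∏ j ∈ Finset.Ioc 0 (f (i+1)),
          F ((f (i+1) : ℤ) - j + conjP f j - ((i+1 : ℕ):ℤ) + 1))
        = ∏ j ∈ Finset.Ioc 0 (fsh f i),
            F ((fsh f i : ℤ) - j + conjP (fsh f) j - i + 1) := by
      intro i hi
      simp only [Finset.mem_Ioc] at hi
      have hfi : fsh f i = f (i+1) := by simp [fsh, if_neg (by omega : ¬ i = 0)]
      rw [hfi]
      refine Finset.prod_congr rfl fun j hj => ?_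
      simp only [Finset.mem_Ioc] at hj
      have hjf1 : j ≤ f 1 := le_trans hj.2 (hanti (i+1) (by omega))
      have hc := conjP_fsh hf hb (by omega : 1 ≤ j) hjf1
      congr 1
      rw [hc]
      push_cast
      ring
    have hD : ∀ i ∈ Finset.Ioc 0 n,
        (∏ j ∈ Finset.Ioc (i+1) (n+1), F ((bP f (n+1) (i+1) : ℤ) - (bP f (n+1) j : ℤ)))
        = ∏ j ∈ Finset.Ioc i n, F ((bP (fsh f) n i : ℤ) - (bP (fsh f) n j : ℤ)) := by
      intro i hi
      rw [prod_Ioc_shift]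
      refine Finset.prod_congr rfl fun j hj => ?_
      simp only [Finset.mem_Ioc] at hi hj
      rw [hbP i (by simp only [Finset.mem_Ioc]; omega),
        hbP j (by simp only [Finset.mem_Ioc]; omega)]
    have hR : ∀ i ∈ Finset.Ioc 0 n,
        (∏ k ∈ Finset.Ioc 0 (bP f (n+1) (i+1)), F (k : ℤ))
        = ∏ k ∈ Finset.Ioc 0 (bP (fsh f) n i), F (k : ℤ) := by
      intro i hi
      rw [hbP i hi]
    rw [eH, eD, eR, Finset.prod_congr rfl hH, Finset.prod_congr rfl hD,
      Finset.prod_congr rfl hR, mul_mul_mul_comm, IH (fsh f) hfp hfb]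
    congr 1
    rw [hbP1]
    exact first_row F hf hb
/-! ### structure of a rim hook -/

lemma telescope_Ioc (f : ℕ → ℕ) : ∀ a b : ℕ, a ≤ b →
    ∑ i ∈ Finset.Ioc a b, ((f (i-1) : ℤ) - f i) = (f a : ℤ) - f b := by
  intro a b hab
  induction b, hab using Nat.le_induction with
  | base => simp
  | succ b hab ih =>
    rw [Finset.sum_Ioc_succ_top hab, ih]
    simp only [Nat.add_sub_cancel]
    ring

lemma strip_structure {e : ℕ} (he1 : 1 ≤ e) {f g : ℕ → ℕ} (hf : IsPartition f)
    (hg : IsPartition g) (hA : AddsEHook e f g) {n : ℕ} (hbf : Bnd f n) (hbg : Bnd g n) :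
    ∃ r s : ℕ, 1 ≤ r ∧ r ≤ s ∧ s ≤ n ∧
      (∀ i, i < r → g i = f i) ∧
      (∀ i, s < i → g i = f i) ∧
      (∀ i, r ≤ i → i < s → g (i+1) = f i + 1) ∧
      f r < g r ∧
      g r + s = f s + e + r := by
  obtain ⟨hle, hwt, hconn, h2x2⟩ := hA
  have hstr : ∀ i j : ℕ, (InDiagram g (i,j) ∧ ¬ InDiagram f (i,j))
      ↔ (1 ≤ i ∧ f i < j ∧ j ≤ g i) := by
    intro i j
    simp only [InDiagram, not_and, not_le]
    constructor
    · rintro ⟨⟨h1, h2, h3⟩, h4⟩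
      exact ⟨h1, h4 h1 h2, h3⟩
    · rintro ⟨h1, h2, h3⟩
      exact ⟨⟨h1, by omega, h3⟩, fun _ _ => h2⟩
  -- the set of modified rows
  set Sf : Finset ℕ := (Finset.Ioc 0 n).filter (fun i => f i < g i) with hSf
  have hne : Sf.Nonempty := by
    by_contra hemp
    rw [Finset.not_nonempty_iff_eq_empty, Finset.filter_eq_empty_iff] at hemp
    have : ∑ i ∈ Finset.Ioc 0 n, g i = ∑ i ∈ Finset.Ioc 0 n, f i := by
      refine Finset.sum_congr rfl fun i hi => ?_
      have h1 := hemp hi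
      have h2 := hle i
      omega
    rw [← wtP_eq hg hbg, ← wtP_eq hf hbf, hwt] at this
    omega
  set r := Sf.min' hne with hr
  set s := Sf.max' hne with hs
  have hrmem : r ∈ Sf := Sf.min'_mem hne
  have hsmem : s ∈ Sf := Sf.max'_mem hne
  have hrs : r ≤ s := Sf.min'_le s hsmem
  have hr1 : 1 ≤ r ∧ r ≤ n ∧ f r < g r := by
    have := hrmem; rw [hSf, Finset.mem_filter, Finset.mem_Ioc] at this; omega
  have hs1 : 1 ≤ s ∧ s ≤ n ∧ f s < g s := by
    have := hsmem; rw [hSf, Finset.mem_filter, Finset.mem_Ioc] at this; omega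
  have houtlow : ∀ i, i < r → g i = f i := by
    intro i hi
    rcases Nat.eq_zero_or_pos i with h | h
    · rw [h, hf.1, hg.1]
    rcases Nat.lt_or_ge n i with h2 | h2
    · rw [hbf i h2, hbg i h2]
    have : i ∉ Sf := fun hmem => by have := Sf.min'_le i hmem; omega
    rw [hSf, Finset.mem_filter, Finset.mem_Ioc] at this
    have := hle i
    omega
  have houthigh : ∀ i, s < i → g i = f i := by
    intro i hi
    rcases Nat.lt_or_ge n i with h2 | h2
    · rw [hbf i h2, hbg i h2]
    have : i ∉ Sf := fun hmem => by have := Sf.le_max' i hmem; omega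
    rw [hSf, Finset.mem_filter, Finset.mem_Ioc] at this
    have := hle i
    omega
  -- crossing lemma
  have key : ∀ p q : ℕ × ℕ, Relation.ReflTransGen
      (fun a b => (InDiagram g a ∧ ¬ InDiagram f a) ∧
          (InDiagram g b ∧ ¬ InDiagram f b) ∧ AdjCell a b) p q →
      ∀ i, p.1 ≤ i → i < q.1 →
      ∃ j, (1 ≤ i ∧ f i < j ∧ j ≤ g i) ∧ (f (i+1) < j ∧ j ≤ g (i+1)) := by
    intro p q hpath
    induction hpath with
    | refl => intro i h1 h2; omega
    | @tail b c hpb hbc ih =>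
      intro i h1 h2
      rcases Nat.lt_or_ge i b.1 with hb | hb
      · exact ih i h1 hb
      · obtain ⟨hSb, hSc, hadj⟩ := hbc
        rcases hadj with ⟨hrow, _⟩ | ⟨hcol, hpm⟩
        · omega
        · rcases hpm with h | h
          · have hbi : b.1 = i := by omega
            have hc1 : c.1 = i + 1 := by omega
            refine ⟨b.2, ?_, ?_⟩
            · have hb' : (i, b.2) = b := by rw [← hbi]
              exact (hstr i b.2).mp (hb' ▸ hSb)
            · have hc' : (i+1, b.2) = c := by rw [← hc1, hcol]
              have := (hstr (i+1) b.2).mp (hc' ▸ hSc)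
              exact ⟨this.2.1, this.2.2⟩
          · omega
  have hcross : ∀ i, r ≤ i → i < s →
      ∃ j, (1 ≤ i ∧ f i < j ∧ j ≤ g i) ∧ (f (i+1) < j ∧ j ≤ g (i+1)) := by
    intro i hri his
    have hp : InDiagram g (r, f r + 1) ∧ ¬ InDiagram f (r, f r + 1) :=
      (hstr r (f r + 1)).mpr ⟨hr1.1, by omega, by omega⟩
    have hq : InDiagram g (s, f s + 1) ∧ ¬ InDiagram f (s, f s + 1) :=
      (hstr s (f s + 1)).mpr ⟨hs1.1, by omega, by omega⟩
    exact key _ _ (hconn _ _ hp hq) i hri his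
  have hstep : ∀ i, r ≤ i → i < s → g (i+1) = f i + 1 := by
    intro i hri his
    obtain ⟨j, hj1, hj2⟩ := hcross i hri his
    have hgm : g (i+1) ≤ g i := hg.2.1 i (by omega)
    have hfm : f (i+1) ≤ f i := hf.2.1 i (by omega)
    have hub : g (i+1) ≤ f i + 1 := by
      by_contra hcon
      apply h2x2
      refine ⟨i, f i + 1, ?_, ?_, ?_, ?_⟩
      · exact (hstr i (f i + 1)).mpr ⟨by omega, by omega, by omega⟩
      · exact (hstr (i+1) (f i + 1)).mpr ⟨by omega, by omega, by omega⟩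
      · exact (hstr i (f i + 2)).mpr ⟨by omega, by omega, by omega⟩
      · exact (hstr (i+1) (f i + 2)).mpr ⟨by omega, by omega, by omega⟩
    omega
  refine ⟨r, s, hr1.1, hrs, hs1.2.1, houtlow, houthigh, hstep, hr1.2.2, ?_⟩
  -- the weight count
  have hsum : ∑ i ∈ Finset.Ioc 0 n, (g i : ℤ) = ∑ i ∈ Finset.Ioc 0 n, (f i : ℤ) + e := by
    have h1 := wtP_eq hg hbg
    have h2 := wtP_eq hf hbf
    have := hwt
    rw [h1, h2] at this
    exact_mod_cast this
  have hsplitg := Finset.sum_Ioc_consecutive (fun i => (g i : ℤ)) (by omega : 0 ≤ r - 1)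
    (by omega : r - 1 ≤ n)
  have hsplitg2 := Finset.sum_Ioc_consecutive (fun i => (g i : ℤ))
    (by omega : r - 1 ≤ s) (by omega : s ≤ n)
  have hsplitf := Finset.sum_Ioc_consecutive (fun i => (f i : ℤ)) (by omega : 0 ≤ r - 1)
    (by omega : r - 1 ≤ n)
  have hsplitf2 := Finset.sum_Ioc_consecutive (fun i => (f i : ℤ))
    (by omega : r - 1 ≤ s) (by omega : s ≤ n)
  have heqlow : ∑ i ∈ Finset.Ioc 0 (r-1), (g i : ℤ) = ∑ i ∈ Finset.Ioc 0 (r-1), (f i : ℤ) := by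
    refine Finset.sum_congr rfl fun i hi => ?_
    simp only [Finset.mem_Ioc] at hi
    rw [houtlow i (by omega)]
  have heqhigh : ∑ i ∈ Finset.Ioc s n, (g i : ℤ) = ∑ i ∈ Finset.Ioc s n, (f i : ℤ) := by
    refine Finset.sum_congr rfl fun i hi => ?_
    simp only [Finset.mem_Ioc] at hi
    rw [houthigh i (by omega)]
  have hmid : ∑ i ∈ Finset.Ioc (r-1) s, (g i : ℤ)
      = ∑ i ∈ Finset.Ioc (r-1) s, (f i : ℤ) + e := by
    have e1 : ∑ i ∈ Finset.Ioc (r-1) s, (g i : ℤ)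
        = ∑ i ∈ Finset.Ioc 0 n, (g i : ℤ) - ∑ i ∈ Finset.Ioc 0 (r-1), (g i : ℤ)
          - ∑ i ∈ Finset.Ioc s n, (g i : ℤ) := by
      rw [← hsplitg, ← hsplitg2]; ring
    have e2 : ∑ i ∈ Finset.Ioc (r-1) s, (f i : ℤ)
        = ∑ i ∈ Finset.Ioc 0 n, (f i : ℤ) - ∑ i ∈ Finset.Ioc 0 (r-1), (f i : ℤ)
          - ∑ i ∈ Finset.Ioc s n, (f i : ℤ) := by
      rw [← hsplitf, ← hsplitf2]; ring
    rw [e1, e2, hsum, heqlow, heqhigh]; ring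
  -- split off i = r
  have hconsr : Finset.Ioc (r-1) s = Finset.cons r (Finset.Ioc r s)
      Finset.left_notMem_Ioc := by
    rw [← Finset.Icc_eq_cons_Ioc hrs]
    ext i; simp only [Finset.mem_Ioc, Finset.mem_Icc]; omega
  rw [hconsr, Finset.sum_cons, Finset.sum_cons] at hmid
  have hinner : ∑ i ∈ Finset.Ioc r s, (g i : ℤ)
      = ∑ i ∈ Finset.Ioc r s, (f i : ℤ) + ((f r : ℤ) - f s) + (s - r) := by
    have hterm : ∀ i ∈ Finset.Ioc r s, (g i : ℤ) = (f (i-1) : ℤ) - f i + ((f i : ℤ) + 1) := by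
      intro i hi
      simp only [Finset.mem_Ioc] at hi
      have := hstep (i-1) (by omega) (by omega)
      rw [show i - 1 + 1 = i by omega] at this
      rw [this]
      push_cast
      ring
    rw [Finset.sum_congr rfl hterm, Finset.sum_add_distrib, telescope_Ioc f r s hrs,
      Finset.sum_add_distrib, Finset.sum_const, Nat.card_Ioc]
    have : ((s - r : ℕ) : ℤ) = (s : ℤ) - r := by omega
    push_cast
    ring_nf
    omega
  rw [hinner] at hmid
  -- conclude
  have : (g r : ℤ) + s = (f s : ℤ) + e + r := by omega
  omega
/-! ### the function F(h) = x^h + 1 and window products -/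

noncomputable def Ff {K : Type*} [Field K] (x : K) (h : ℤ) : K := x ^ h + 1

section Ffsec
variable {K : Type*} [Field K] {x : K} {e : ℕ}

lemma Ff_period (hx0 : x ≠ 0) (hxe : x ^ e = 1) (h : ℤ) : Ff x (h + e) = Ff x h := by
  simp only [Ff]
  rw [zpow_add₀ hx0, zpow_natCast, hxe, mul_one]

lemma Ff_sub_period (hx0 : x ≠ 0) (hxe : x ^ e = 1) (h : ℤ) : Ff x (h - e) = Ff x h := by
  have := Ff_period hx0 hxe (h - e)
  rw [sub_add_cancel] at this
  exact this.symm

lemma Ff_neg (hx0 : x ≠ 0) (v : ℤ) : Ff x (-v) = x ^ (-v : ℤ) * Ff x v := by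
  have hv : x ^ (-v : ℤ) * x ^ v = 1 := by rw [← zpow_add₀ hx0]; simp
  simp only [Ff]
  rw [mul_add, hv, mul_one, add_comm]

lemma window_step (hx0 : x ≠ 0) (hxe : x ^ e = 1) (hFne : ∀ h : ℤ, x ^ h + 1 ≠ 0) (a : ℤ) :
    ∏ k ∈ Finset.range e, Ff x (a + 1 + k) = ∏ k ∈ Finset.range e, Ff x (a + k) := by
  have h1 : ∏ k ∈ Finset.range (e + 1), Ff x (a + k)
      = (∏ k ∈ Finset.range e, Ff x (a + (k + 1))) * Ff x (a + 0) :=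
    Finset.prod_range_succ' (fun k => Ff x (a + k)) e
  have h2 : ∏ k ∈ Finset.range (e + 1), Ff x (a + k)
      = (∏ k ∈ Finset.range e, Ff x (a + k)) * Ff x (a + e) :=
    Finset.prod_range_succ (fun k => Ff x (a + k)) e
  have h3 : Ff x (a + e) = Ff x a := Ff_period hx0 hxe a
  have h4 : (∏ k ∈ Finset.range e, Ff x (a + (k + 1)))
      = ∏ k ∈ Finset.range e, Ff x (a + 1 + k) := by
    refine Finset.prod_congr rfl fun k _ => ?_
    congr 1
    push_cast
    ring
  have hFa : Ff x a ≠ 0 := hFne a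
  have := h1.symm.trans h2
  rw [h4, h3, add_zero] at this
  exact mul_right_cancel₀ hFa this

lemma window_nat (hx0 : x ≠ 0) (hxe : x ^ e = 1) (hFne : ∀ h : ℤ, x ^ h + 1 ≠ 0) (a : ℕ) :
    ∏ k ∈ Finset.range e, Ff x ((a : ℤ) + k) = ∏ k ∈ Finset.range e, Ff x (k : ℤ) := by
  induction a with
  | zero => simp
  | succ a ih =>
    have := window_step hx0 hxe hFne (a : ℤ)
    rw [show ((a + 1 : ℕ) : ℤ) = (a : ℤ) + 1 by push_cast; ring]
    rw [this, ih]

lemma window_Ioc (hx0 : x ≠ 0) (hxe : x ^ e = 1) (hFne : ∀ h : ℤ, x ^ h + 1 ≠ 0) (a : ℕ) :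
    ∏ k ∈ Finset.Ioc a (a + e), Ff x (k : ℤ)
      = ∏ k ∈ Finset.range e, Ff x (k : ℤ) := by
  have h1 : Finset.Ioc a (a + e) = Finset.Ico (a + 1) (a + e + 1) := by
    ext k; simp only [Finset.mem_Ioc, Finset.mem_Ico]; omega
  rw [h1, Finset.prod_Ico_eq_prod_range, show a + e + 1 - (a + 1) = e by omega]
  have h2 : ∀ k ∈ Finset.range e, Ff x ((a + 1 + k : ℕ) : ℤ)
      = Ff x (((a+1 : ℕ) : ℤ) + k) := by
    intro k _
    norm_cast
  rw [Finset.prod_congr rfl h2, window_nat hx0 hxe hFne (a+1)]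

end Ffsec
/-! ### more interval helpers -/

lemma prod_Ioc_shift' {M : Type*} [CommMonoid M] (h : ℕ → M) {r s : ℕ} (hr : 1 ≤ r)
    (hs : 1 ≤ s) : ∏ i ∈ Finset.Ioc r s, h i = ∏ i ∈ Finset.Ioc (r-1) (s-1), h (i+1) := by
  have := prod_Ioc_shift h (r-1) (s-1)
  rw [show r - 1 + 1 = r by omega, show s - 1 + 1 = s by omega] at this
  exact this

lemma sum_Ioc_shift' {M : Type*} [AddCommMonoid M] (h : ℕ → M) {r s : ℕ} (hr : 1 ≤ r)
    (hs : 1 ≤ s) : ∑ i ∈ Finset.Ioc r s, h i = ∑ i ∈ Finset.Ioc (r-1) (s-1), h (i+1) := by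
  have := sum_Ioc_shift h (r-1) (s-1)
  rw [show r - 1 + 1 = r by omega, show s - 1 + 1 = s by omega] at this
  exact this

lemma prod_Ioc_top' {M : Type*} [CommMonoid M] (h : ℕ → M) {a s : ℕ} (ha : a ≤ s - 1)
    (hs : 1 ≤ s) : ∏ i ∈ Finset.Ioc a s, h i = (∏ i ∈ Finset.Ioc a (s-1), h i) * h s := by
  have := Finset.prod_Ioc_succ_top (a := a) (b := s - 1) ha h
  rw [show s - 1 + 1 = s by omega] at this
  exact this

lemma sum_Ioc_top' {M : Type*} [AddCommMonoid M] (h : ℕ → M) {a s : ℕ} (ha : a ≤ s - 1)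
    (hs : 1 ≤ s) : ∑ i ∈ Finset.Ioc a s, h i = (∑ i ∈ Finset.Ioc a (s-1), h i) + h s := by
  have := Finset.sum_Ioc_succ_top (a := a) (b := s - 1) ha h
  rw [show s - 1 + 1 = s by omega] at this
  exact this

lemma sum2i : ∀ a b : ℕ, a ≤ b →
    ∑ i ∈ Finset.Ioc a b, (2 * (i:ℤ)) = ((b:ℤ) - a) * ((a:ℤ) + b + 1) := by
  intro a b hab
  induction b, hab using Nat.le_induction with
  | base => simp
  | succ b hab ih =>
    rw [Finset.sum_Ioc_succ_top hab, ih]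
    push_cast
    ring

/-! ### the abstract quantities -/

noncomputable def Ppd {K : Type*} [Field K] (x : K) (f : ℕ → ℕ) : K :=
  ∏ i ∈ Finset.Ioc 0 (wtP f), Ff x (i : ℤ)

noncomputable def Dpd {K : Type*} [Field K] (x : K) (n : ℕ) (f : ℕ → ℕ) : K :=
  ∏ i ∈ Finset.Ioc 0 n, ∏ j ∈ Finset.Ioc i n, Ff x ((bP f n i : ℤ) - (bP f n j : ℤ))

noncomputable def Rpd {K : Type*} [Field K] (x : K) (n : ℕ) (f : ℕ → ℕ) : K :=
  ∏ i ∈ Finset.Ioc 0 n, ∏ k ∈ Finset.Ioc 0 (bP f n i), Ff x (k : ℤ)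

def nlZ (n : ℕ) (f : ℕ → ℕ) : ℤ := ∑ i ∈ Finset.Ioc 0 n, ((i:ℤ) - 1) * f i
theorem step_main {K : Type*} [Field K] {x : K} {e : ℕ} (hx0 : x ≠ 0) (hxe : x ^ e = 1)
    (hFne : ∀ h : ℤ, x ^ h + 1 ≠ 0) (he1 : 1 ≤ e) {f g : ℕ → ℕ}
    (hf : IsPartition f) (hg : IsPartition g) (hA : AddsEHook e f g)
    {n : ℕ} (hbf : Bnd f n) (hbg : Bnd g n) :
    x ^ (nlZ n g) * Ppd x g * Dpd x n g * (Rpd x n g)⁻¹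
      = x ^ (nlZ n f) * Ppd x f * Dpd x n f * (Rpd x n f)⁻¹ := by
  have hFne' : ∀ h : ℤ, Ff x h ≠ 0 := hFne
  obtain ⟨r, s, hr1, hrs, hsn, hlow, hhigh, hstp, hfrgr, hgr⟩ :=
    strip_structure he1 hf hg hA hbf hbg
  have hwt := hA.2.1
  set T : ℤ := ∑ i ∈ Finset.Ioc (r-1) (s-1), ((bP f n i : ℤ) - (bP f n s : ℤ)) with hT
  set Cw : K := ∏ k ∈ Finset.range e, Ff x (k : ℤ) with hCw
  -- β-number facts
  have hBlow : ∀ i, i < r → bP g n i = bP f n i := by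
    intro i hi; simp only [bP, hlow i hi]
  have hBhigh : ∀ i, s < i → bP g n i = bP f n i := by
    intro i hi; simp only [bP, hhigh i hi]
  have hBmid : ∀ i, r < i → i ≤ s → bP g n i = bP f n (i-1) := by
    intro i h1 h2
    have h3 := hstp (i-1) (by omega) (by omega)
    rw [show i - 1 + 1 = i by omega] at h3
    simp only [bP, h3]
    omega
  have hBr : bP g n r = bP f n s + e := by
    simp only [bP]
    omega
  have hconsr : Finset.Ioc (r-1) s = Finset.cons r (Finset.Ioc r s)
      Finset.left_notMem_Ioc := by
    rw [← Finset.Icc_eq_cons_Ioc hrs]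
    ext i; simp only [Finset.mem_Ioc, Finset.mem_Icc]; omega
  have split3 : ∀ (h : ℕ → K), ∏ i ∈ Finset.Ioc 0 n, h i
      = (∏ i ∈ Finset.Ioc 0 (r-1), h i) *
        ((∏ i ∈ Finset.Ioc (r-1) s, h i) * (∏ i ∈ Finset.Ioc s n, h i)) := by
    intro h
    rw [Finset.prod_Ioc_consecutive h (show r-1 ≤ s by omega) hsn,
      Finset.prod_Ioc_consecutive h (show 0 ≤ r-1 by omega) (show r-1 ≤ n by omega)]
  have ssplit3 : ∀ (h : ℕ → ℤ), ∑ i ∈ Finset.Ioc 0 n, h i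
      = (∑ i ∈ Finset.Ioc 0 (r-1), h i) +
        ((∑ i ∈ Finset.Ioc (r-1) s, h i) + (∑ i ∈ Finset.Ioc s n, h i)) := by
    intro h
    rw [Finset.sum_Ioc_consecutive h (show r-1 ≤ s by omega) hsn,
      Finset.sum_Ioc_consecutive h (show 0 ≤ r-1 by omega) (show r-1 ≤ n by omega)]
  -- (R1)
  have hPp : Ppd x g = Ppd x f * Cw := by
    rw [Ppd, Ppd, hwt,
      ← Finset.prod_Ioc_consecutive _ (Nat.zero_le (wtP f)) (by omega : wtP f ≤ wtP f + e),
      window_Ioc hx0 hxe hFne (wtP f)]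
  -- (R2)
  have hinner_shift : ∀ m : ℕ, ∏ k ∈ Finset.Ioc 0 (m + e), Ff x (k : ℤ)
      = (∏ k ∈ Finset.Ioc 0 m, Ff x (k : ℤ)) * Cw := by
    intro m
    rw [← Finset.prod_Ioc_consecutive _ (Nat.zero_le m) (by omega : m ≤ m + e),
      window_Ioc hx0 hxe hFne m]
  have hRp : Rpd x n g = Rpd x n f * Cw := by
    rw [Rpd, Rpd, split3, split3]
    have e1 : ∏ i ∈ Finset.Ioc 0 (r-1), ∏ k ∈ Finset.Ioc 0 (bP g n i), Ff x (k : ℤ)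
        = ∏ i ∈ Finset.Ioc 0 (r-1), ∏ k ∈ Finset.Ioc 0 (bP f n i), Ff x (k : ℤ) := by
      refine Finset.prod_congr rfl fun i hi => ?_
      simp only [Finset.mem_Ioc] at hi
      rw [hBlow i (by omega)]
    have e3 : ∏ i ∈ Finset.Ioc s n, ∏ k ∈ Finset.Ioc 0 (bP g n i), Ff x (k : ℤ)
        = ∏ i ∈ Finset.Ioc s n, ∏ k ∈ Finset.Ioc 0 (bP f n i), Ff x (k : ℤ) := by
      refine Finset.prod_congr rfl fun i hi => ?_
      simp only [Finset.mem_Ioc] at hi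
      rw [hBhigh i (by omega)]
    have e2 : ∏ i ∈ Finset.Ioc (r-1) s, ∏ k ∈ Finset.Ioc 0 (bP g n i), Ff x (k : ℤ)
        = (∏ i ∈ Finset.Ioc (r-1) s, ∏ k ∈ Finset.Ioc 0 (bP f n i), Ff x (k : ℤ)) * Cw := by
      conv_lhs => rw [hconsr, Finset.prod_cons]
      rw [hBr, hinner_shift,
        prod_Ioc_shift' (fun i => ∏ k ∈ Finset.Ioc 0 (bP g n i), Ff x (k : ℤ))
          (r := r) (s := s) (by omega) (by omega)]
      have e2a : ∀ i ∈ Finset.Ioc (r-1) (s-1),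
          (∏ k ∈ Finset.Ioc 0 (bP g n (i+1)), Ff x (k : ℤ))
          = ∏ k ∈ Finset.Ioc 0 (bP f n i), Ff x (k : ℤ) := by
        intro i hi
        simp only [Finset.mem_Ioc] at hi
        rw [hBmid (i+1) (by omega) (by omega), Nat.add_sub_cancel]
      rw [Finset.prod_congr rfl e2a,
        prod_Ioc_top' (fun i => ∏ k ∈ Finset.Ioc 0 (bP f n i), Ff x (k : ℤ))
          (show r-1 ≤ s-1 by omega) (by omega)]
      ring
    rw [e1, e2, e3]
    ring
  -- (R3) block lemmas
  have blockB : ∀ c : ℤ, ∏ j ∈ Finset.Ioc (r-1) s, Ff x (c - (bP g n j : ℤ))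
      = ∏ j ∈ Finset.Ioc (r-1) s, Ff x (c - (bP f n j : ℤ)) := by
    intro c
    rw [hconsr, Finset.prod_cons, Finset.prod_cons, hBr]
    have l1 : Ff x (c - ((bP f n s + e : ℕ) : ℤ)) = Ff x (c - (bP f n s : ℤ)) := by
      rw [show c - ((bP f n s + e : ℕ) : ℤ) = (c - (bP f n s:ℤ)) - e by push_cast; ring]
      exact Ff_sub_period hx0 hxe _
    have l2 : ∏ j ∈ Finset.Ioc r s, Ff x (c - (bP g n j : ℤ))
        = ∏ j ∈ Finset.Ioc (r-1) (s-1), Ff x (c - (bP f n j : ℤ)) := by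
      rw [prod_Ioc_shift' _ (by omega) (by omega)]
      refine Finset.prod_congr rfl fun j hj => ?_
      simp only [Finset.mem_Ioc] at hj
      rw [hBmid (j+1) (by omega) (by omega), Nat.add_sub_cancel]
    have l3 : ∏ j ∈ Finset.Ioc r s, Ff x (c - (bP f n j : ℤ))
        = (∏ j ∈ Finset.Ioc (r-1) (s-1), Ff x (c - (bP f n (j+1) : ℤ))) := by
      rw [prod_Ioc_shift' _ (by omega) (by omega)]
    -- rewrite RHS: cons r (Ioc r s) form already used; instead show both equal
    rw [l1, l2]
    -- goal : Ff (c - Bf s) * ∏_{Ioc (r-1)(s-1)} Ff (c - Bf j)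
    --      = Ff (c - Bf r) * ∏_{Ioc r s} Ff (c - Bf j)
    have l4 : (Finset.Ioc (r-1) s).prod (fun j => Ff x (c - (bP f n j : ℤ)))
        = (∏ j ∈ Finset.Ioc (r-1) (s-1), Ff x (c - (bP f n j : ℤ)))
          * Ff x (c - (bP f n s : ℤ)) :=
      prod_Ioc_top' _ (show r-1 ≤ s-1 by omega) (by omega)
    rw [hconsr, Finset.prod_cons] at l4
    rw [← mul_comm (Ff x (c - (bP f n s : ℤ))) _] at l4
    -- l4 : Ff (c - Bf r) * ∏_{Ioc r s} = Ff (c - Bf s) * ∏_{Ioc (r-1)(s-1)}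
    exact l4.symm
  have blockA : ∀ c : ℤ, ∏ i ∈ Finset.Ioc (r-1) s, Ff x ((bP g n i : ℤ) - c)
      = ∏ i ∈ Finset.Ioc (r-1) s, Ff x ((bP f n i : ℤ) - c) := by
    intro c
    rw [hconsr, Finset.prod_cons, Finset.prod_cons, hBr]
    have l1 : Ff x (((bP f n s + e : ℕ) : ℤ) - c) = Ff x ((bP f n s : ℤ) - c) := by
      rw [show ((bP f n s + e : ℕ) : ℤ) - c = ((bP f n s:ℤ) - c) + e by push_cast; ring]
      exact Ff_period hx0 hxe _
    have l2 : ∏ i ∈ Finset.Ioc r s, Ff x ((bP g n i : ℤ) - c)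
        = ∏ i ∈ Finset.Ioc (r-1) (s-1), Ff x ((bP f n i : ℤ) - c) := by
      rw [prod_Ioc_shift' _ (by omega) (by omega)]
      refine Finset.prod_congr rfl fun i hi => ?_
      simp only [Finset.mem_Ioc] at hi
      rw [hBmid (i+1) (by omega) (by omega), Nat.add_sub_cancel]
    rw [l1, l2]
    have l4 : (Finset.Ioc (r-1) s).prod (fun i => Ff x ((bP f n i : ℤ) - c))
        = (∏ i ∈ Finset.Ioc (r-1) (s-1), Ff x ((bP f n i : ℤ) - c))
          * Ff x ((bP f n s : ℤ) - c) :=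
      prod_Ioc_top' _ (show r-1 ≤ s-1 by omega) (by omega)
    rw [hconsr, Finset.prod_cons] at l4
    rw [← mul_comm (Ff x ((bP f n s : ℤ) - c)) _] at l4
    exact l4.symm
  -- core triangle
  have hcore : (∏ i ∈ Finset.Ioc (r-1) s, ∏ j ∈ Finset.Ioc i s,
        Ff x ((bP g n i : ℤ) - (bP g n j : ℤ)))
      = x ^ (-T) * ∏ i ∈ Finset.Ioc (r-1) s, ∏ j ∈ Finset.Ioc i s,
        Ff x ((bP f n i : ℤ) - (bP f n j : ℤ)) := by
    have hterm1 : ∏ j ∈ Finset.Ioc r s, Ff x ((bP g n r : ℤ) - (bP g n j : ℤ))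
        = x ^ (-T) * ∏ j ∈ Finset.Ioc (r-1) (s-1),
            Ff x ((bP f n j : ℤ) - (bP f n s : ℤ)) := by
      rw [prod_Ioc_shift' _ (by omega) (by omega)]
      have t1 : ∀ j ∈ Finset.Ioc (r-1) (s-1),
          Ff x ((bP g n r : ℤ) - (bP g n (j+1) : ℤ))
          = x ^ ((bP f n s : ℤ) - (bP f n j : ℤ)) *
            Ff x ((bP f n j : ℤ) - (bP f n s : ℤ)) := by
        intro j hj
        simp only [Finset.mem_Ioc] at hj
        rw [hBmid (j+1) (by omega) (by omega), Nat.add_sub_cancel, hBr]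
        rw [show ((bP f n s + e : ℕ) : ℤ) - (bP f n j : ℤ)
            = (-(((bP f n j : ℤ)) - (bP f n s : ℤ))) + e by push_cast; ring]
        rw [Ff_period hx0 hxe, Ff_neg hx0]
        congr 1
        congr 1
        ring
      rw [Finset.prod_congr rfl t1, Finset.prod_mul_distrib, prod_zpow_sum hx0]
      congr 2
      rw [hT, ← Finset.sum_neg_distrib]
      exact Finset.sum_congr rfl fun i _ => by ring
    have hterm2 : (∏ i ∈ Finset.Ioc r s, ∏ j ∈ Finset.Ioc i s,
          Ff x ((bP g n i : ℤ) - (bP g n j : ℤ)))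
        = ∏ i ∈ Finset.Ioc (r-1) (s-1), ∏ j ∈ Finset.Ioc i (s-1),
            Ff x ((bP f n i : ℤ) - (bP f n j : ℤ)) := by
      rw [prod_Ioc_shift' _ (by omega) (by omega)]
      refine Finset.prod_congr rfl fun i hi => ?_
      simp only [Finset.mem_Ioc] at hi
      rw [prod_Ioc_shift' _ (by omega) (by omega), Nat.add_sub_cancel]
      refine Finset.prod_congr rfl fun j hj => ?_
      simp only [Finset.mem_Ioc] at hj
      rw [hBmid (i+1) (by omega) (by omega), hBmid (j+1) (by omega) (by omega),
        Nat.add_sub_cancel, Nat.add_sub_cancel]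
    have hrhs : (∏ i ∈ Finset.Ioc (r-1) s, ∏ j ∈ Finset.Ioc i s,
          Ff x ((bP f n i : ℤ) - (bP f n j : ℤ)))
        = (∏ i ∈ Finset.Ioc (r-1) (s-1), ∏ j ∈ Finset.Ioc i (s-1),
            Ff x ((bP f n i : ℤ) - (bP f n j : ℤ)))
          * ∏ j ∈ Finset.Ioc (r-1) (s-1), Ff x ((bP f n j : ℤ) - (bP f n s : ℤ)) := by
      rw [prod_Ioc_top' (fun i => ∏ j ∈ Finset.Ioc i s,
        Ff x ((bP f n i : ℤ) - (bP f n j : ℤ))) (show r-1 ≤ s-1 by omega) (by omega)]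
      rw [Finset.Ioc_self, Finset.prod_empty, mul_one, ← Finset.prod_mul_distrib]
      refine Finset.prod_congr rfl fun i hi => ?_
      simp only [Finset.mem_Ioc] at hi
      exact prod_Ioc_top' _ (by omega) (by omega)
    rw [hrhs]
    conv_lhs => rw [hconsr, Finset.prod_cons]
    rw [hterm1, hterm2]
    ring
  -- Dp assembly
  have hDp : Dpd x n g = Dpd x n f * x ^ (-T) := by
    rw [Dpd, Dpd, split3, split3]
    have d1 : ∏ i ∈ Finset.Ioc 0 (r-1), ∏ j ∈ Finset.Ioc i n,
        Ff x ((bP g n i : ℤ) - (bP g n j : ℤ))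
        = ∏ i ∈ Finset.Ioc 0 (r-1), ∏ j ∈ Finset.Ioc i n,
            Ff x ((bP f n i : ℤ) - (bP f n j : ℤ)) := by
      refine Finset.prod_congr rfl fun i hi => ?_
      simp only [Finset.mem_Ioc] at hi
      rw [hBlow i (by omega)]
      rw [← Finset.prod_Ioc_consecutive _ (show i ≤ r-1 by omega) (show r-1 ≤ n by omega),
        ← Finset.prod_Ioc_consecutive _ (show r-1 ≤ s by omega) hsn]
      rw [← Finset.prod_Ioc_consecutive (fun j => Ff x ((bP f n i : ℤ) - (bP f n j : ℤ)))
          (show i ≤ r-1 by omega) (show r-1 ≤ n by omega),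
        ← Finset.prod_Ioc_consecutive (fun j => Ff x ((bP f n i : ℤ) - (bP f n j : ℤ)))
          (show r-1 ≤ s by omega) hsn]
      congr 1
      · refine Finset.prod_congr rfl fun j hj => ?_
        simp only [Finset.mem_Ioc] at hj
        rw [hBlow j (by omega)]
      congr 1
      · exact blockB _
      · refine Finset.prod_congr rfl fun j hj => ?_
        simp only [Finset.mem_Ioc] at hj
        rw [hBhigh j (by omega)]
    have d3 : ∏ i ∈ Finset.Ioc s n, ∏ j ∈ Finset.Ioc i n,
        Ff x ((bP g n i : ℤ) - (bP g n j : ℤ))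
        = ∏ i ∈ Finset.Ioc s n, ∏ j ∈ Finset.Ioc i n,
            Ff x ((bP f n i : ℤ) - (bP f n j : ℤ)) := by
      refine Finset.prod_congr rfl fun i hi => ?_
      simp only [Finset.mem_Ioc] at hi
      rw [hBhigh i (by omega)]
      refine Finset.prod_congr rfl fun j hj => ?_
      simp only [Finset.mem_Ioc] at hj
      rw [hBhigh j (by omega)]
    have d2 : ∏ i ∈ Finset.Ioc (r-1) s, ∏ j ∈ Finset.Ioc i n,
        Ff x ((bP g n i : ℤ) - (bP g n j : ℤ))
        = (∏ i ∈ Finset.Ioc (r-1) s, ∏ j ∈ Finset.Ioc i n,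
            Ff x ((bP f n i : ℤ) - (bP f n j : ℤ))) * x ^ (-T) := by
      have dsplit : ∀ (F2 : ℕ → ℕ → K), (∀ i ∈ Finset.Ioc (r-1) s, True) →
          ∏ i ∈ Finset.Ioc (r-1) s, ∏ j ∈ Finset.Ioc i n, F2 i j
          = (∏ i ∈ Finset.Ioc (r-1) s, ∏ j ∈ Finset.Ioc i s, F2 i j)
            * ∏ i ∈ Finset.Ioc (r-1) s, ∏ j ∈ Finset.Ioc s n, F2 i j := by
        intro F2 _
        rw [← Finset.prod_mul_distrib]
        refine Finset.prod_congr rfl fun i hi => ?_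
        simp only [Finset.mem_Ioc] at hi
        rw [Finset.prod_Ioc_consecutive _ (show i ≤ s by omega) hsn]
      rw [dsplit _ (fun _ _ => trivial), dsplit _ (fun _ _ => trivial)]
      have dtail : ∏ i ∈ Finset.Ioc (r-1) s, ∏ j ∈ Finset.Ioc s n,
          Ff x ((bP g n i : ℤ) - (bP g n j : ℤ))
          = ∏ i ∈ Finset.Ioc (r-1) s, ∏ j ∈ Finset.Ioc s n,
              Ff x ((bP f n i : ℤ) - (bP f n j : ℤ)) := by
        rw [Finset.prod_comm]
        rw [Finset.prod_comm (s := Finset.Ioc (r-1) s)]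
        refine Finset.prod_congr rfl fun j hj => ?_
        simp only [Finset.mem_Ioc] at hj
        have : ∀ i ∈ Finset.Ioc (r-1) s, Ff x ((bP g n i : ℤ) - (bP g n j : ℤ))
            = Ff x ((bP g n i : ℤ) - (bP f n j : ℤ)) := by
          intro i _
          rw [hBhigh j (by omega)]
        rw [Finset.prod_congr rfl this]
        exact blockA _
      rw [dtail, hcore]
      ring
    rw [d1, d2, d3]
    ring
  -- (R4)
  have hnl : nlZ n g = nlZ n f + T + ((r:ℤ) - 1) * e := by
    rw [nlZ, nlZ, ssplit3, ssplit3]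
    have n1 : ∑ i ∈ Finset.Ioc 0 (r-1), ((i:ℤ) - 1) * g i
        = ∑ i ∈ Finset.Ioc 0 (r-1), ((i:ℤ) - 1) * f i := by
      refine Finset.sum_congr rfl fun i hi => ?_
      simp only [Finset.mem_Ioc] at hi
      rw [hlow i (by omega)]
    have n3 : ∑ i ∈ Finset.Ioc s n, ((i:ℤ) - 1) * g i
        = ∑ i ∈ Finset.Ioc s n, ((i:ℤ) - 1) * f i := by
      refine Finset.sum_congr rfl fun i hi => ?_
      simp only [Finset.mem_Ioc] at hi
      rw [hhigh i (by omega)]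
    have n2 : ∑ i ∈ Finset.Ioc (r-1) s, ((i:ℤ) - 1) * g i
        = ∑ i ∈ Finset.Ioc (r-1) s, ((i:ℤ) - 1) * f i + T + ((r:ℤ) - 1) * e := by
      have hmg : ∑ i ∈ Finset.Ioc (r-1) s, ((i:ℤ) - 1) * g i
          = ((r:ℤ) - 1) * g r
            + ∑ i ∈ Finset.Ioc (r-1) (s-1), (i:ℤ) * ((f i : ℤ) + 1) := by
        rw [hconsr, Finset.sum_cons, sum_Ioc_shift' _ (by omega) (by omega)]
        congr 1
        refine Finset.sum_congr rfl fun i hi => ?_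
        simp only [Finset.mem_Ioc] at hi
        rw [hstp i (by omega) (by omega)]
        push_cast
        ring
      have hmf : ∑ i ∈ Finset.Ioc (r-1) s, ((i:ℤ) - 1) * f i
          = ∑ i ∈ Finset.Ioc (r-1) (s-1), ((i:ℤ) - 1) * f i + ((s:ℤ) - 1) * f s := by
        have := sum_Ioc_top' (fun i => ((i:ℤ) - 1) * f i)
          (show r-1 ≤ s-1 by omega) (by omega)
        exact this
      have hTT : T = ∑ i ∈ Finset.Ioc (r-1) (s-1),
          ((f i : ℤ) - (f s : ℤ) + (s:ℤ) - (i:ℤ)) := by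
        rw [hT]
        refine Finset.sum_congr rfl fun i hi => ?_
        simp only [Finset.mem_Ioc] at hi
        simp only [bP]
        omega
      have hptw : ∑ i ∈ Finset.Ioc (r-1) (s-1), (i:ℤ) * ((f i : ℤ) + 1)
          = ∑ i ∈ Finset.Ioc (r-1) (s-1), ((i:ℤ) - 1) * f i
            + ∑ i ∈ Finset.Ioc (r-1) (s-1), ((f i : ℤ) - f s + (s:ℤ) - i)
            + ∑ i ∈ Finset.Ioc (r-1) (s-1), (2 * (i:ℤ) + ((f s : ℤ) - s)) := by
        rw [← Finset.sum_add_distrib, ← Finset.sum_add_distrib]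
        exact Finset.sum_congr rfl fun i _ => by ring
      have hconst : ∑ i ∈ Finset.Ioc (r-1) (s-1), (2 * (i:ℤ) + ((f s : ℤ) - s))
          = ((s:ℤ) - r) * ((r:ℤ) + s - 1) + ((s:ℤ) - r) * ((f s : ℤ) - s) := by
        rw [Finset.sum_add_distrib, sum2i (r-1) (s-1) (by omega), Finset.sum_const,
          Nat.card_Ioc, nsmul_eq_mul]
        have c1 : ((s - 1 - (r - 1) : ℕ) : ℤ) = (s:ℤ) - r := by omega
        have c2 : ((s - 1 : ℕ) : ℤ) = (s:ℤ) - 1 := by omega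
        have c3 : ((r - 1 : ℕ) : ℤ) = (r:ℤ) - 1 := by omega
        rw [c1, c2, c3]
        ring
      have hgrZ : (g r : ℤ) = (f s : ℤ) + e + r - s := by omega
      rw [hmg, hmf, hptw, hconst, hgrZ, ← hTT]
      ring
    rw [n1, n2, n3]
    ring
  -- final assembly
  have hCw0 : Cw ≠ 0 := by
    rw [hCw]
    exact Finset.prod_ne_zero_iff.mpr fun k _ => hFne' _
  have hRf0 : Rpd x n f ≠ 0 := by
    rw [Rpd]
    exact Finset.prod_ne_zero_iff.mpr fun i _ =>
      Finset.prod_ne_zero_iff.mpr fun k _ => hFne' _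
  have hxT0 : x ^ T ≠ 0 := zpow_ne_zero _ hx0
  have hre : x ^ (((r:ℤ) - 1) * e) = 1 := by
    rw [mul_comm, zpow_mul, zpow_natCast, hxe, one_zpow]
  rw [hPp, hRp, hDp, hnl, zpow_add₀ hx0, zpow_add₀ hx0, hre, zpow_neg]
  rw [mul_inv]
  field_simp
section Final

variable {l : ℕ} [Fact l.Prime]

lemma Fne_zmod (hlodd : Odd l) {x : ZMod l} (hx0 : x ≠ 0) {e : ℕ}
    (he : e = orderOf x) (heo : Odd e) : ∀ h : ℤ, x ^ h + 1 ≠ 0 := by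
  have hxe : x ^ e = 1 := by rw [he]; exact pow_orderOf_eq_one x
  have he0 : e ≠ 0 := by rcases heo with ⟨k, hk⟩; omega
  have h1 : (1 : ZMod l) ≠ -1 := by
    intro hcon
    have h2 : ((2 : ℕ) : ZMod l) = 0 := by
      push_cast
      linear_combination hcon
    have hdvd : l ∣ 2 := (ZMod.natCast_eq_zero_iff 2 l).mp h2
    have hl2 : l = 2 := by
      have := (Fact.out : l.Prime).two_le
      have := Nat.le_of_dvd (by norm_num) hdvd
      omega
    rw [hl2] at hlodd
    exact (Nat.not_odd_iff_even.mpr (by norm_num)) hlodd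
  intro h hcon
  have hxh : x ^ h = -1 := by linear_combination hcon
  -- reduce the exponent mod e
  set k : ℕ := (h % (e : ℤ)).toNat with hk
  have hmodnn : 0 ≤ h % (e : ℤ) := Int.emod_nonneg h (by exact_mod_cast he0)
  have hmodlt : h % (e : ℤ) < e := Int.emod_lt_of_pos h (by exact_mod_cast Nat.pos_of_ne_zero he0)
  have hklt : k < e := by omega
  have hxk : x ^ (k : ℕ) = -1 := by
    have h1' : x ^ ((k : ℕ) : ℤ) = x ^ h := by
      rw [show ((k : ℕ) : ℤ) = h % (e : ℤ) by omega]
      conv_rhs => rw [show h = (e : ℤ) * (h / e) + h % e from (Int.mul_ediv_add_emod h e).symm]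
      rw [zpow_add₀ hx0, zpow_mul, zpow_natCast, hxe, one_zpow, one_mul]
    rw [← zpow_natCast x k, h1', hxh]
  have h2k : x ^ (k * 2) = 1 := by
    rw [pow_mul, hxk]
    norm_num
  have hdvd2 : e ∣ k * 2 := by
    rw [he]
    exact orderOf_dvd_of_pow_eq_one h2k
  have hcop : Nat.Coprime e 2 := Nat.coprime_two_right.mpr heo
  have hdvdk : e ∣ k := hcop.dvd_of_dvd_mul_right hdvd2
  have hk0 : k = 0 := by
    rcases Nat.eq_zero_or_pos k with h0 | h0
    · exact h0
    · have := Nat.le_of_dvd h0 hdvdk; omega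
  rw [hk0, pow_zero] at hxk
  exact h1 hxk

lemma RP_repr (q : ℤ) {f : ℕ → ℕ} (hf : IsPartition f) {n : ℕ} (hb : Bnd f n)
    (hFne : ∀ h : ℤ, ((-q : ℤ) : ZMod l) ^ h + 1 ≠ 0) :
    RP l q f = ((-q : ℤ) : ZMod l) ^ (nlZ n f) * Ppd ((-q : ℤ) : ZMod l) f
      * Dpd ((-q : ℤ) : ZMod l) n f * (Rpd ((-q : ℤ) : ZMod l) n f)⁻¹ := by
  set x : ZMod l := ((-q : ℤ) : ZMod l) with hx
  set F0 : ℤ → ZMod l := fun h => x ^ h + 1 with hF0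
  have hFne' : ∀ h : ℤ, F0 h ≠ 0 := hFne
  have hD0 : Dpd x n f ≠ 0 := by
    rw [Dpd]
    exact Finset.prod_ne_zero_iff.mpr fun i _ =>
      Finset.prod_ne_zero_iff.mpr fun j _ => hFne _
  have hR0 : Rpd x n f ≠ 0 := by
    rw [Rpd]
    exact Finset.prod_ne_zero_iff.mpr fun i _ =>
      Finset.prod_ne_zero_iff.mpr fun k _ => hFne _
  have hid := hook_identity F0 n f hf hb
  have hHm := hooks_prod F0 hf hb
  have hDd : Dpd x n f = ∏ i ∈ Finset.Ioc 0 n, ∏ j ∈ Finset.Ioc i n,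
      F0 ((bP f n i : ℤ) - (bP f n j : ℤ)) := rfl
  have hRd : Rpd x n f = ∏ i ∈ Finset.Ioc 0 n, ∏ k ∈ Finset.Ioc 0 (bP f n i),
      F0 (k : ℤ) := rfl
  have hHminv : (((hooksP f).map F0).prod)⁻¹ = Dpd x n f * (Rpd x n f)⁻¹ := by
    have hHmval : ((hooksP f).map F0).prod = Rpd x n f * (Dpd x n f)⁻¹ := by
      rw [eq_mul_inv_iff_mul_eq₀ hD0, hHm, hRd, hDd]
      exact hid
    rw [hHmval, mul_inv, inv_inv, mul_comm]
  have hPpf : (∏ i ∈ Finset.Icc 1 (wtP f), (x ^ i + 1)) = Ppd x f := by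
    rw [Ppd, ← Ioc_zero_eq_Icc_one]
    refine Finset.prod_congr rfl fun i _ => ?_
    rw [Ff, zpow_natCast]
  have hdp : dP f = nlZ n f := dP_eq hf hb
  rw [RP, hdp, hPpf, hHminv]
  ring

end Final


/-- Let `l` be an odd prime, `q` an integer not divisible by `l`, with
the multiplicative order `e` of `-q` modulo `l` odd.  If the partitions `λ` and `μ` have
the same `e`-core, i.e. they are connected by a finite sequence of partitions in which
each term is obtained from the previous one by adding or removing an `e`-hook, then
`R_λ = R_μ` in `ℤ/lℤ`; that is, `P_λ(q²)/P_λ(−q) mod l` depends only on the `e`-core. -/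
theorem R_eq_of_same_e_core
    (l : ℕ) [Fact l.Prime] (hlodd : Odd l) (q : ℤ) (hq : ¬ (l : ℤ) ∣ q)
    (e : ℕ) (he : e = orderOf ((-q : ℤ) : ZMod l)) (heo : Odd e)
    (f m : ℕ → ℕ) (hf : IsPartition f) (hm : IsPartition m)
    (hcore : Relation.ReflTransGen
      (fun a b => IsPartition a ∧ IsPartition b ∧ (AddsEHook e a b ∨ AddsEHook e b a))
      f m) :
    RP l q f = RP l q m := by
  set x : ZMod l := ((-q : ℤ) : ZMod l) with hx
  have hx0 : x ≠ 0 := by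
    rw [hx]
    intro hcon
    rw [ZMod.intCast_zmod_eq_zero_iff_dvd] at hcon
    exact hq ((dvd_neg).mp hcon)
  have hxe : x ^ e = 1 := by rw [he]; exact pow_orderOf_eq_one x
  have hFne : ∀ h : ℤ, x ^ h + 1 ≠ 0 := Fne_zmod hlodd hx0 he heo
  have he1 : 1 ≤ e := by rcases heo with ⟨k, hk⟩; omega
  have step : ∀ a b : ℕ → ℕ, IsPartition a → IsPartition b → AddsEHook e a b →
      RP l q a = RP l q b := by
    intro a b ha hb hab
    obtain ⟨Na, hNa⟩ := ha.2.2
    obtain ⟨Nb, hNb⟩ := hb.2.2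
    have hban : Bnd a (max Na Nb) := fun i hi => hNa i (by omega)
    have hbbn : Bnd b (max Na Nb) := fun i hi => hNb i (by omega)
    rw [RP_repr q ha hban hFne, RP_repr q hb hbbn hFne]
    exact (step_main hx0 hxe hFne he1 ha hb hab hban hbbn).symm
  clear hm
  induction hcore with
  | refl => rfl
  | tail hrel hstep ih =>
    obtain ⟨hPa, hPb, hor⟩ := hstep
    rcases hor with h | h
    · exact ih.trans (step _ _ hPa hPb h)
    · exact ih.trans (step _ _ hPb hPa h).symm
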